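/- Let T be a subgroup of S_6 of order 120 with no fixed point. Then the action of S_6 on the left cosets of T induces an embedding (injective homomorphism) ψ : S_6 → S_6, which is therefore an automorphism, and ψ is not inner. -/

import Mathlib

open Equiv Equiv.Perm

lemma step1 (K : Subgroup (Perm (Fin 6))) [K.Normal] {σ : Perm (Fin 6)} (hσ : σ ∈ K)
    (i k : Fin 6) (hik : k ≠ i) (hkj : k ≠ σ i) (hmove : σ i ≠ i) :
    ∃ c ∈ K, c ≠ 1 ∧ ∀ x : Fin 6, x ≠ i → x ≠ k → x ≠ σ i → x ≠ σ k → c x = x := by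
  set τ : Perm (Fin 6) := Equiv.swap i k with hτ
  refine ⟨σ * (τ * σ⁻¹ * τ⁻¹), K.mul_mem hσ (Subgroup.Normal.conj_mem ‹K.Normal› _ (K.inv_mem hσ) τ), ?_, ?_⟩
  · have heval : (σ * (τ * σ⁻¹ * τ⁻¹)) (σ i) = σ k := by
      simp only [Perm.mul_apply, hτ, Equiv.swap_inv]
      rw [Equiv.swap_apply_of_ne_of_ne (fun h => hmove h) (fun h => hkj h.symm)]
      simp [Equiv.swap_apply_left]
    intro h
    rw [h, Perm.one_apply] at heval
    exact hik (σ.injective heval).symm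
  · intro x hxi hxk hxsi hxsk
    have h1 : τ⁻¹ x = x := by
      rw [hτ, Equiv.swap_inv]; exact Equiv.swap_apply_of_ne_of_ne hxi hxk
    have h2 : σ * τ * σ⁻¹ = Equiv.swap (σ i) (σ k) := (Equiv.swap_apply_apply σ i k).symm
    have h3 : σ * (τ * σ⁻¹ * τ⁻¹) = (σ * τ * σ⁻¹) * τ⁻¹ := by group
    rw [h3, h2]
    simp only [Perm.mul_apply, h1]
    exact Equiv.swap_apply_of_ne_of_ne hxsi hxsk

lemma conj_form (K : Subgroup (Perm (Fin 6))) [K.Normal] {c : Perm (Fin 6)} (hc : c ∈ K)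
    (i k : Fin 6) : Equiv.swap (c i) (c k) * Equiv.swap i k ∈ K := by
  have h : Equiv.swap (c i) (c k) * Equiv.swap i k
      = c * (Equiv.swap i k * c⁻¹ * (Equiv.swap i k)⁻¹) := by
    rw [Equiv.swap_inv, Equiv.swap_apply_apply]; group
  rw [h]
  exact K.mul_mem hc (Subgroup.Normal.conj_mem ‹K.Normal› _ (K.inv_mem hc) _)

lemma normal_eq_bot (K : Subgroup (Perm (Fin 6))) [K.Normal] (hcard : Nat.card K ≤ 120) :
    K = ⊥ := by
  by_contra hne
  obtain ⟨⟨σ, hσK⟩, hσ1⟩ := Subgroup.ne_bot_iff_exists_ne_one.mp hne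
  obtain ⟨i, hi⟩ : ∃ i, σ i ≠ i := by
    by_contra h; push_neg at h
    exact hσ1 (Subtype.ext (Equiv.ext h))
  obtain ⟨k, hk⟩ : ∃ k, k ∉ ({i, σ i} : Finset (Fin 6)) := by
    by_contra h; push_neg at h
    have hsub : (Finset.univ : Finset (Fin 6)) ⊆ {i, σ i} := fun x _ => h x
    have := Finset.card_le_card hsub
    have h2 : ({i, σ i} : Finset (Fin 6)).card ≤ 2 :=
      (Finset.card_insert_le _ _).trans (by simp)
    simp [Finset.card_univ] at this
    omega
  simp only [Finset.mem_insert, Finset.mem_singleton, not_or] at hk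
  obtain ⟨c, hcK, hc1, hcfix⟩ := step1 K (σ := σ) hσK i k hk.1 hk.2 hi
  obtain ⟨i', hi'⟩ : ∃ i', c i' ≠ i' := by
    by_contra h; push_neg at h
    exact hc1 (Equiv.ext h)
  obtain ⟨k', hk'⟩ : ∃ k', k' ∉ ({i, k, σ i, σ k} : Finset (Fin 6)) := by
    by_contra h; push_neg at h
    have hsub : (Finset.univ : Finset (Fin 6)) ⊆ {i, k, σ i, σ k} := fun x _ => h x
    have := Finset.card_le_card hsub
    have h2 : ({i, k, σ i, σ k} : Finset (Fin 6)).card ≤ 4 := by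
      refine (Finset.card_insert_le _ _).trans ?_
      refine Nat.succ_le_succ ?_
      refine (Finset.card_insert_le _ _).trans ?_
      refine Nat.succ_le_succ ?_
      exact (Finset.card_insert_le _ _).trans (by simp)
    simp [Finset.card_univ] at this
    omega
  simp only [Finset.mem_insert, Finset.mem_singleton, not_or] at hk'
  have hck' : c k' = k' := hcfix k' hk'.1 hk'.2.1 hk'.2.2.1 hk'.2.2.2
  have hki' : k' ≠ i' := fun h => hi' (h ▸ hck')
  have hkci' : k' ≠ c i' := by
    intro h
    apply hi'
    have : c (c i') = c i' := by rw [← h, hck', h]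
    exact c.injective this
  have htK : Equiv.swap (c i') (c k') * Equiv.swap i' k' ∈ K := conj_form K hcK i' k'
  rw [hck'] at htK
  have ht3 : (Equiv.swap (c i') k' * Equiv.swap i' k').IsThreeCycle := by
    rw [Equiv.swap_comm (c i') k', Equiv.swap_comm i' k']
    exact Equiv.Perm.isThreeCycle_swap_mul_swap_same hkci' hki' hi'
  have hall : ∀ g : Perm (Fin 6), g.IsThreeCycle → g ∈ K := by
    intro g hg
    have hconj : IsConj (Equiv.swap (c i') k' * Equiv.swap i' k') g :=
      Equiv.Perm.isConj_iff_cycleType_eq.mpr (ht3.trans hg.symm)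
    obtain ⟨h, hh⟩ := isConj_iff.mp hconj
    rw [← hh]
    exact Subgroup.Normal.conj_mem ‹K.Normal› _ htK h
  have halt : alternatingGroup (Fin 6) ≤ K := by
    rw [← Equiv.Perm.closure_three_cycles_eq_alternating]
    exact (Subgroup.closure_le K).mpr fun g hg => hall g hg
  have hle : Nat.card (alternatingGroup (Fin 6)) ≤ Nat.card K :=
    Subgroup.card_le_of_le halt
  have h360 : Nat.card (alternatingGroup (Fin 6)) = 360 := by
    have h2 : 2 * Fintype.card (alternatingGroup (Fin 6)) = 720 := by
      rw [two_mul_card_alternatingGroup, Fintype.card_perm, Fintype.card_fin]; rfl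
    rw [Nat.card_eq_fintype_card]
    omega
  omega

/-- If `T ≤ S_6` has order `120` and no fixed point, then the action of `S_6` on the left
cosets of `T` induces an injective homomorphism `ψ : S_6 → Sym(S_6/T)`; identifying the six
cosets with `{0,…,5}` by any bijection, `ψ` is an automorphism of `S_6` and is not inner. -/
theorem stmt15 (T : Subgroup (Equiv.Perm (Fin 6))) (hT : Nat.card T = 120)
    (hfree : ¬ ∃ i : Fin 6, ∀ t ∈ T, t i = i) :
    Function.Injective
      (MulAction.toPermHom (Equiv.Perm (Fin 6)) (Equiv.Perm (Fin 6) ⧸ T)) ∧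
    ∀ b : (Equiv.Perm (Fin 6) ⧸ T) ≃ Fin 6,
      Function.Bijective (fun x : Equiv.Perm (Fin 6) =>
        b.permCongr (MulAction.toPermHom (Equiv.Perm (Fin 6)) (Equiv.Perm (Fin 6) ⧸ T) x)) ∧
      ¬ ∃ g : Equiv.Perm (Fin 6), ∀ x : Equiv.Perm (Fin 6),
        b.permCongr (MulAction.toPermHom (Equiv.Perm (Fin 6)) (Equiv.Perm (Fin 6) ⧸ T) x)
          = g * x * g⁻¹ := by
  set ψ := MulAction.toPermHom (Equiv.Perm (Fin 6)) (Equiv.Perm (Fin 6) ⧸ T) with hψ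
  have hkerle : ψ.ker ≤ T := by
    intro x hx
    have h1 : ψ x = 1 := hx
    have h2 : x • (QuotientGroup.mk (1 : Perm (Fin 6)) : Perm (Fin 6) ⧸ T)
        = QuotientGroup.mk 1 := by
      have : ψ x (QuotientGroup.mk 1) = QuotientGroup.mk 1 := by rw [h1]; rfl
      exact this
    rw [MulAction.Quotient.smul_mk, smul_eq_mul, mul_one] at h2
    simpa using (QuotientGroup.eq.mp h2.symm)
  have hker : ψ.ker = ⊥ := by
    apply normal_eq_bot
    calc Nat.card ψ.ker ≤ Nat.card T := Subgroup.card_le_of_le hkerle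
    _ = 120 := hT
  have hinj : Function.Injective ψ := (MonoidHom.ker_eq_bot_iff ψ).mp hker
  refine ⟨hinj, fun b => ⟨?_, ?_⟩⟩
  · exact Finite.injective_iff_bijective.mp ((b.permCongr.injective).comp hinj)
  · rintro ⟨g, hg⟩
    apply hfree
    refine ⟨g⁻¹ (b (QuotientGroup.mk 1)), fun t ht => ?_⟩
    have h2 := congrArg (fun f : Perm (Fin 6) => f (b (QuotientGroup.mk 1))) (hg t)
    simp only [Equiv.permCongr_apply, Equiv.symm_apply_apply, Perm.mul_apply] at h2
    have h3 : ψ t (QuotientGroup.mk 1) = QuotientGroup.mk 1 := by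
      show t • (QuotientGroup.mk (1 : Perm (Fin 6)) : Perm (Fin 6) ⧸ T) = QuotientGroup.mk 1
      rw [MulAction.Quotient.smul_mk, smul_eq_mul, mul_one]
      exact QuotientGroup.eq.mpr (by simpa using T.inv_mem ht)
    rw [h3] at h2
    have h4 := congrArg (fun y => g⁻¹ y) h2
    simp only [Perm.inv_def, Equiv.symm_apply_apply] at h4
    exact h4.symm
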